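/- For all 3×3 matrices x, y over K with tr(x) = 0 and tr(y) = 0, the pseudo-octonion product satisfies (x∗y)∗x = (1/6)·tr(x²)·y and x∗(y∗x) = (1/6)·tr(x²)·y. (That is, the pseudo-octonion algebra is a symmetric composition algebra with norm q(x) = (1/6)tr(x²).) -/
import Mathlib


/-- The product of the pseudo-octonion algebra on `3 × 3` matrices:
`x ∗ y = μ·xy + (1−μ)·yx − (1/3)·tr(xy)·I₃`. -/
noncomputable def pstar (K : Type*) [Field K] (μ : K)
    (x y : Matrix (Fin 3) (Fin 3) K) : Matrix (Fin 3) (Fin 3) K :=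
  μ • (x * y) + (1 - μ) • (y * x) - ((x * y).trace / 3) • (1 : Matrix (Fin 3) (Fin 3) K)

theorem polarCH (K : Type*) [Field K] [CharZero K]
    (x y : Matrix (Fin 3) (Fin 3) K) (hx : x.trace = 0) (hy : y.trace = 0) :
    x * x * y + x * y * x + y * (x * x) =
      (x * y).trace • x + (x * x * y).trace • (1 : Matrix (Fin 3) (Fin 3) K)
        + ((x * x).trace / 2) • y := by
  rw [Matrix.trace_fin_three] at hx hy
  have h22 : x 2 2 = -(x 0 0 + x 1 1) := by linear_combination hx
  have k22 : y 2 2 = -(y 0 0 + y 1 1) := by linear_combination hy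
  ext i j
  fin_cases i <;> fin_cases j <;>
    simp [Matrix.mul_apply, Fin.sum_univ_three, Matrix.trace_fin_three, Matrix.one_apply,
      h22, k22] <;> ring

theorem aux1 (K : Type*) [Field K] [CharZero K] (μ : K) (hμ : μ * (1 - μ) = 1/3)
    (x y : Matrix (Fin 3) (Fin 3) K) (hx : x.trace = 0) (hy : y.trace = 0) :
    pstar K μ (pstar K μ x y) x = ((x * x).trace / 6) • y := by
  have key := polarCH K x y hx hy
  have hxxy : x * x * y =
      (x * y).trace • x + (x * x * y).trace • (1 : Matrix (Fin 3) (Fin 3) K)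
        + ((x * x).trace / 2) • y - x * y * x - y * (x * x) := by
    linear_combination (norm := abel) key
  simp only [pstar, Matrix.add_mul, Matrix.sub_mul, Matrix.smul_mul, Matrix.mul_add,
    Matrix.mul_sub, Matrix.mul_smul, Matrix.trace_add, Matrix.trace_sub, Matrix.trace_smul,
    Matrix.trace_one, one_mul, mul_one, Matrix.mul_one, Matrix.one_mul, mul_assoc,
    Matrix.mul_assoc, smul_smul]
  have t1 : (x * y * x).trace = (x * x * y).trace := by
    rw [Matrix.trace_mul_comm, ← Matrix.mul_assoc]
  have t2 : (y * (x * x)).trace = (x * x * y).trace := Matrix.trace_mul_comm y (x * x)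
  rw [show x * (y * x) = x * y * x from (Matrix.mul_assoc x y x).symm,
    show x * (x * y) = x * x * y from (Matrix.mul_assoc x x y).symm, hxxy, hx, t1, t2]
  simp only [smul_eq_mul]
  match_scalars
  all_goals try ring
  all_goals try linear_combination (-3 : K) * hμ
  all_goals try linear_combination (x * y).trace * hμ
  all_goals try linear_combination (x * x * y).trace * hμ
  all_goals try linear_combination ((x * x).trace / 2) * hμ

theorem aux2 (K : Type*) [Field K] [CharZero K] (μ : K) (hμ : μ * (1 - μ) = 1/3)
    (x y : Matrix (Fin 3) (Fin 3) K) (hx : x.trace = 0) (hy : y.trace = 0) :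
    pstar K μ x (pstar K μ y x) = ((x * x).trace / 6) • y := by
  have key := polarCH K x y hx hy
  have hxxy : x * x * y =
      (x * y).trace • x + (x * x * y).trace • (1 : Matrix (Fin 3) (Fin 3) K)
        + ((x * x).trace / 2) • y - x * y * x - y * (x * x) := by
    linear_combination (norm := abel) key
  have t1 : (x * y * x).trace = (x * x * y).trace := by
    rw [Matrix.trace_mul_comm, ← Matrix.mul_assoc]
  have t2 : (y * (x * x)).trace = (x * x * y).trace := Matrix.trace_mul_comm y (x * x)
  have t3 : (y * x).trace = (x * y).trace := Matrix.trace_mul_comm y x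
  simp only [pstar, Matrix.add_mul, Matrix.sub_mul, Matrix.smul_mul, Matrix.mul_add,
    Matrix.mul_sub, Matrix.mul_smul, Matrix.trace_add, Matrix.trace_sub, Matrix.trace_smul,
    Matrix.trace_one, one_mul, mul_one, Matrix.mul_one, Matrix.one_mul, smul_smul]
  rw [show x * (y * x) = x * y * x from (Matrix.mul_assoc x y x).symm,
    show x * (x * y) = x * x * y from (Matrix.mul_assoc x x y).symm,
    show y * x * x = y * (x * x) from Matrix.mul_assoc y x x, hx, t3]
  rw [t1] <;> try rw [t2]
  set s := (x * x * y).trace with hs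
  rw [hxxy]
  simp only [smul_eq_mul]
  match_scalars
  all_goals try ring
  all_goals try linear_combination (-3 : K) * hμ
  all_goals try linear_combination (x * y).trace * hμ
  all_goals try linear_combination (x * x * y).trace * hμ
  all_goals try linear_combination ((x * x).trace / 2) * hμ

/-- The pseudo-octonion algebra is a symmetric composition algebra with norm
`q(x) = (1/6)·tr(x²)`: for trace-zero `x, y` one has `(x∗y)∗x = q(x)·y = x∗(y∗x)`. -/
theorem pseudoOctonion_symmetric_composition
    (K : Type*) [Field K] [CharZero K] (ω : K) (hω1 : ω ≠ 1) (hω3 : ω ^ 3 = 1)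
    (x y : Matrix (Fin 3) (Fin 3) K) (hx : x.trace = 0) (hy : y.trace = 0) :
    pstar K ((1 - ω) / 3) (pstar K ((1 - ω) / 3) x y) x = ((x * x).trace / 6) • y ∧
      pstar K ((1 - ω) / 3) x (pstar K ((1 - ω) / 3) y x) = ((x * x).trace / 6) • y := by
  have hq : ω ^ 2 + ω + 1 = 0 := by
    have h0 : (ω - 1) * (ω ^ 2 + ω + 1) = 0 := by linear_combination hω3
    rcases mul_eq_zero.mp h0 with h | h
    · exact absurd (sub_eq_zero.mp h) hω1
    · exact h
  have hμ : (1 - ω) / 3 * (1 - (1 - ω) / 3) = 1 / 3 := by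
    linear_combination (-1 / 9 : K) * hq
  exact ⟨aux1 K _ hμ x y hx hy, aux2 K _ hμ x y hx hy⟩
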